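/- Proposition 1 (expectation of the skedastic slope estimator): E[γ̂₁] = [ Σ_{i=1}^N (log(s_i²) − m̄) · log v_i ] / [ Σ_{k=1}^N (log(s_k²) − m̄)² ]. -/

import Mathlib

open MeasureTheory ProbabilityTheory Matrix Finset
open scoped NNReal ENNReal

section Helpers
open Real Set
open scoped NNReal ENNReal

lemma pdf_conv_pointwise {v1 v2 : ℝ≥0} (h1 : v1 ≠ 0) (h2 : v2 ≠ 0) (z x : ℝ) :
    gaussianPDFReal 0 v1 x * gaussianPDFReal 0 v2 (z - x)
      = gaussianPDFReal ((v1 : ℝ) * z / ((v1 : ℝ) + v2)) (v1 * v2 / (v1 + v2)) x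
        * gaussianPDFReal 0 (v1 + v2) z := by
  have ha : (0 : ℝ) < v1 := lt_of_le_of_ne v1.coe_nonneg (by exact_mod_cast h1.symm)
  have hb : (0 : ℝ) < v2 := lt_of_le_of_ne v2.coe_nonneg (by exact_mod_cast h2.symm)
  have hab : (0 : ℝ) < (v1 : ℝ) + v2 := by linarith
  have hw : ((v1 * v2 / (v1 + v2) : ℝ≥0) : ℝ) = (v1 : ℝ) * v2 / ((v1 : ℝ) + v2) := by
    push_cast; ring
  have hwpos : (0 : ℝ) < (v1 : ℝ) * v2 / ((v1 : ℝ) + v2) := by positivity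
  simp only [gaussianPDFReal, NNReal.coe_add, hw, sub_zero]
  have hpi : (0 : ℝ) < π := pi_pos
  rw [mul_mul_mul_comm]
  rw [show ((√(2 * π * ((v1:ℝ) * v2 / ((v1:ℝ) + v2))))⁻¹ * rexp (-(x - (v1:ℝ) * z / ((v1:ℝ) + v2)) ^ 2 / (2 * ((v1:ℝ) * v2 / ((v1:ℝ) + v2)))))
      * ((√(2 * π * ((v1:ℝ) + v2)))⁻¹ * rexp (-z ^ 2 / (2 * ((v1:ℝ) + (v2:ℝ)))))
      = ((√(2 * π * ((v1:ℝ) * v2 / ((v1:ℝ) + v2))))⁻¹ * (√(2 * π * ((v1:ℝ) + v2)))⁻¹)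
        * (rexp (-(x - (v1:ℝ) * z / ((v1:ℝ) + v2)) ^ 2 / (2 * ((v1:ℝ) * v2 / ((v1:ℝ) + v2)))) * rexp (-z ^ 2 / (2 * ((v1:ℝ) + (v2:ℝ))))) from by ring]
  congr 1
  · rw [← mul_inv, ← mul_inv, ← Real.sqrt_mul (by positivity), ← Real.sqrt_mul (by positivity)]
    congr 1
    field_simp
  · rw [← Real.exp_add, ← Real.exp_add]
    congr 1
    field_simp
    ring

lemma lintegral_pdf_conv {v1 v2 : ℝ≥0} (h1 : v1 ≠ 0) (h2 : v2 ≠ 0) (z : ℝ) :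
    ∫⁻ x, gaussianPDF 0 v1 x * gaussianPDF 0 v2 (z - x) = gaussianPDF 0 (v1 + v2) z := by
  have hw : v1 * v2 / (v1 + v2) ≠ 0 := by
    rw [ne_eq, div_eq_zero_iff]
    push_neg
    exact ⟨mul_ne_zero h1 h2, by simp [h1]⟩
  calc ∫⁻ x, gaussianPDF 0 v1 x * gaussianPDF 0 v2 (z - x)
      = ∫⁻ x, gaussianPDF ((v1 : ℝ) * z / ((v1 : ℝ) + v2)) (v1 * v2 / (v1 + v2)) x
          * ENNReal.ofReal (gaussianPDFReal 0 (v1 + v2) z) := by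
        congr 1; ext x
        rw [gaussianPDF, gaussianPDF, gaussianPDF, ← ENNReal.ofReal_mul (gaussianPDFReal_nonneg _ _ _),
          ← ENNReal.ofReal_mul (gaussianPDFReal_nonneg _ _ _), pdf_conv_pointwise h1 h2]
    _ = (∫⁻ x, gaussianPDF ((v1 : ℝ) * z / ((v1 : ℝ) + v2)) (v1 * v2 / (v1 + v2)) x)
          * ENNReal.ofReal (gaussianPDFReal 0 (v1 + v2) z) :=
        lintegral_mul_const' _ _ ENNReal.ofReal_ne_top
    _ = gaussianPDF 0 (v1 + v2) z := by
        rw [lintegral_gaussianPDF_eq_one _ hw, one_mul, gaussianPDF]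

lemma map_add_prod_gaussian {v1 v2 : ℝ≥0} (h1 : v1 ≠ 0) (h2 : v2 ≠ 0) :
    Measure.map (fun p : ℝ × ℝ => p.1 + p.2) ((gaussianReal 0 v1).prod (gaussianReal 0 v2))
      = gaussianReal 0 (v1 + v2) := by
  have hadd : Measurable fun p : ℝ × ℝ => p.1 + p.2 := measurable_fst.add measurable_snd
  have h12 : v1 + v2 ≠ 0 := by simp [h1]
  ext s hs
  rw [Measure.map_apply hadd hs, gaussianReal_of_var_ne_zero _ h1,
    gaussianReal_of_var_ne_zero _ h2, gaussianReal_of_var_ne_zero _ h12,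
    Measure.prod_apply (hadd hs), withDensity_apply _ hs]
  have hmk : ∀ x : ℝ, Prod.mk x ⁻¹' ((fun p : ℝ × ℝ => p.1 + p.2) ⁻¹' s)
      = (fun y => x + y) ⁻¹' s := fun x => rfl
  have step1 : ∀ x : ℝ, (volume.withDensity (gaussianPDF 0 v2))
        (Prod.mk x ⁻¹' ((fun p : ℝ × ℝ => p.1 + p.2) ⁻¹' s))
      = ∫⁻ z, s.indicator (fun z => gaussianPDF 0 v2 (z - x)) z := by
    intro x
    rw [hmk, withDensity_apply _ ((measurable_const_add x) hs),
      ← lintegral_indicator ((measurable_const_add x) hs) _]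
    have : ∀ y : ℝ, ((fun y => x + y) ⁻¹' s).indicator (gaussianPDF 0 v2) y
        = (fun z => s.indicator (fun z => gaussianPDF 0 v2 (z - x)) z) (x + y) := by
      intro y
      simp only [Set.indicator_apply, Set.mem_preimage]
      by_cases h : x + y ∈ s <;> simp [h]
    simp_rw [this]
    rw [lintegral_add_left_eq_self (fun z => s.indicator (fun z => gaussianPDF 0 v2 (z - x)) z) x]
  simp_rw [step1]
  have hmeas2 : Measurable fun q : ℝ × ℝ => s.indicator (fun z => gaussianPDF 0 v2 (z - q.1)) q.2 := by
    have : Measurable fun q : ℝ × ℝ => gaussianPDF 0 v2 (q.2 - q.1) :=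
      (measurable_gaussianPDF 0 v2).comp (measurable_snd.sub measurable_fst)
    exact (this.indicator (measurable_snd hs))
  rw [lintegral_withDensity_eq_lintegral_mul _ (measurable_gaussianPDF 0 v1)
    (by exact Measurable.lintegral_prod_right hmeas2)]
  simp only [Pi.mul_apply]
  rw [← lintegral_indicator hs _]
  calc ∫⁻ x, gaussianPDF 0 v1 x * ∫⁻ z, s.indicator (fun z => gaussianPDF 0 v2 (z - x)) z
      = ∫⁻ x, ∫⁻ z, s.indicator (fun z => gaussianPDF 0 v1 x * gaussianPDF 0 v2 (z - x)) z := by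
        congr 1; ext x
        have hm : Measurable fun z : ℝ => gaussianPDF 0 v2 (z - x) :=
          (measurable_gaussianPDF 0 v2).comp (measurable_id.sub_const x)
        rw [← lintegral_const_mul _ (hm.indicator hs)]
        congr 1; ext z
        by_cases h : z ∈ s <;> simp [Set.indicator_apply, h]
    _ = ∫⁻ z, ∫⁻ x, s.indicator (fun z => gaussianPDF 0 v1 x * gaussianPDF 0 v2 (z - x)) z := by
        apply lintegral_lintegral_swap
        apply Measurable.aemeasurable
        have : Measurable fun q : ℝ × ℝ => gaussianPDF 0 v1 q.1 * gaussianPDF 0 v2 (q.2 - q.1) :=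
          ((measurable_gaussianPDF 0 v1).comp measurable_fst).mul
            ((measurable_gaussianPDF 0 v2).comp (measurable_snd.sub measurable_fst))
        exact this.indicator (measurable_snd hs)
    _ = ∫⁻ z, s.indicator (gaussianPDF 0 (v1 + v2)) z := by
        congr 1; ext z
        by_cases h : z ∈ s
        · simp only [Set.indicator_of_mem h]
          exact lintegral_pdf_conv h1 h2 z
        · simp [Set.indicator_of_notMem h]

variable {Ω : Type*} [MeasurableSpace Ω]

lemma gaussian_add_rv {μ : Measure Ω} [IsProbabilityMeasure μ] {X Y : Ω → ℝ}
    (hX : Measurable X) (hY : Measurable Y) (hind : IndepFun X Y μ)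
    {v1 v2 : ℝ≥0} (h1 : Measure.map X μ = gaussianReal 0 v1)
    (h2 : Measure.map Y μ = gaussianReal 0 v2) :
    Measure.map (fun ω => X ω + Y ω) μ = gaussianReal 0 (v1 + v2) := by
  by_cases hv1 : v1 = 0
  · have hX0 : X =ᵐ[μ] fun _ => 0 := by
      have : μ (X ⁻¹' {(0 : ℝ)}ᶜ) = 0 := by
        rw [← Measure.map_apply hX (measurableSet_singleton (0:ℝ)).compl, h1, hv1,
          gaussianReal_zero_var, Measure.dirac_apply' _ (measurableSet_singleton (0:ℝ)).compl]
        simp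
      exact this
    have : (fun ω => X ω + Y ω) =ᵐ[μ] Y := by
      filter_upwards [hX0] with ω h; simp [h]
    rw [Measure.map_congr this, h2, hv1, zero_add]
  by_cases hv2 : v2 = 0
  · have hY0 : Y =ᵐ[μ] fun _ => 0 := by
      have : μ (Y ⁻¹' {(0 : ℝ)}ᶜ) = 0 := by
        rw [← Measure.map_apply hY (measurableSet_singleton (0:ℝ)).compl, h2, hv2,
          gaussianReal_zero_var, Measure.dirac_apply' _ (measurableSet_singleton (0:ℝ)).compl]
        simp
      exact this
    have : (fun ω => X ω + Y ω) =ᵐ[μ] X := by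
      filter_upwards [hY0] with ω h; simp [h]
    rw [Measure.map_congr this, h1, hv2, add_zero]
  · have hpair : Measure.map (fun ω => (X ω, Y ω)) μ = (Measure.map X μ).prod (Measure.map Y μ) :=
      (indepFun_iff_map_prod_eq_prod_map_map hX.aemeasurable hY.aemeasurable).mp hind
    have : (fun ω => X ω + Y ω) = (fun p : ℝ × ℝ => p.1 + p.2) ∘ (fun ω => (X ω, Y ω)) := rfl
    rw [this, ← Measure.map_map (g := fun p : ℝ × ℝ => p.1 + p.2) (measurable_fst.add measurable_snd) (hX.prodMk hY), hpair,
      h1, h2, map_add_prod_gaussian hv1 hv2]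

lemma gaussian_sum_rv {μ : Measure Ω} [IsProbabilityMeasure μ] {n : ℕ}
    {X : Fin n → Ω → ℝ} (hmeas : ∀ i, Measurable (X i))
    (hind : iIndepFun X μ) {w : Fin n → ℝ≥0}
    (hX : ∀ i, Measure.map (X i) μ = gaussianReal 0 (w i)) (s : Finset (Fin n)) :
    Measure.map (fun ω => ∑ i ∈ s, X i ω) μ = gaussianReal 0 (∑ i ∈ s, w i) := by
  classical
  induction s using Finset.induction_on with
  | empty =>
      simp only [Finset.sum_empty]
      rw [Measure.map_const, measure_univ, one_smul, ← gaussianReal_zero_var 0]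
  | @insert i s hi ih =>
      have hsummeas : Measurable fun ω => ∑ j ∈ s, X j ω :=
        Finset.measurable_sum s (fun j _ => hmeas j)
      have hsum : IndepFun (fun ω => ∑ j ∈ s, X j ω) (X i) μ := by
        have h := iIndepFun.indepFun_finset_sum_of_notMem hind hmeas hi
        have he : (∑ j ∈ s, X j) = fun ω => ∑ j ∈ s, X j ω := by ext ω; simp
        rwa [he] at h
      have key := gaussian_add_rv hsummeas (hmeas i) hsum ih (hX i)
      simp_rw [Finset.sum_insert hi]
      rw [show (fun ω => X i ω + ∑ j ∈ s, X j ω) = fun ω => (∑ j ∈ s, X j ω) + X i ω from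
        funext fun ω => add_comm _ _, key, add_comm]

lemma integrable_abs_rpow_mul_exp_neg_mul_sq {b : ℝ} (hb : 0 < b) {s : ℝ} (hs : -1 < s) :
    Integrable fun x : ℝ => |x| ^ s * rexp (-b * x ^ 2) := by
  have h1 : IntegrableOn (fun x : ℝ => |x| ^ s * rexp (-b * x ^ 2)) (Ioi 0) := by
    apply (integrableOn_rpow_mul_exp_neg_mul_sq hb hs).congr_fun ?_ measurableSet_Ioi
    intro x hx
    dsimp only
    rw [abs_of_pos hx]
  have h2 : IntegrableOn (fun x : ℝ => |x| ^ s * rexp (-b * x ^ 2)) (Iio 0) := by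
    rw [← (Measure.measurePreserving_neg (volume : Measure ℝ)).integrableOn_comp_preimage
      (Homeomorph.neg ℝ).measurableEmbedding]
    simp only [Function.comp_def, neg_sq, abs_neg, neg_preimage, neg_Iio, neg_neg, neg_zero]
    exact h1
  rw [← integrableOn_univ, ← Iio_union_Ici (a := (0:ℝ)), integrableOn_union,
    integrableOn_Ici_iff_integrableOn_Ioi]
  exact ⟨h2, h1⟩

lemma abs_log_sq_le (x : ℝ) : |Real.log (x ^ 2)| ≤ 4 * |x| ^ (-(1/2) : ℝ) + x ^ 2 := by
  rcases eq_or_ne x 0 with rfl | hx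
  · simp [Real.zero_rpow (by norm_num : (-(1/2) : ℝ) ≠ 0)]
  · have ht : 0 < |x| := abs_pos.mpr hx
    have hx2 : x ^ 2 = |x| ^ 2 := (sq_abs x).symm
    have hlog : Real.log (x ^ 2) = 2 * Real.log |x| := by
      rw [hx2, Real.log_pow]; norm_num
    rcases le_or_gt 1 |x| with h1 | h1
    · have hl : 0 ≤ Real.log |x| := Real.log_nonneg h1
      rw [hlog, abs_of_nonneg (by positivity)]
      have : Real.log (x ^ 2) ≤ x ^ 2 - 1 := Real.log_le_sub_one_of_pos (by positivity)
      rw [hlog] at this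
      have h4 : 0 ≤ 4 * |x| ^ (-(1/2) : ℝ) := by positivity
      linarith
    · have hl : Real.log |x| ≤ 0 := Real.log_nonpos ht.le h1.le
      rw [hlog, abs_of_nonpos (by linarith)]
      set u := |x| ^ (-(1/2) : ℝ) with hu
      have hupos : 0 < u := Real.rpow_pos_of_pos ht _
      have hlogu : Real.log u = -(1/2) * Real.log |x| := Real.log_rpow ht _
      have : Real.log u ≤ u - 1 := Real.log_le_sub_one_of_pos hupos
      nlinarith [sq_nonneg x]

lemma integrable_log_sq_pdf {v : ℝ≥0} (hv : v ≠ 0) :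
    Integrable (fun x : ℝ => Real.log (x ^ 2) * gaussianPDFReal 0 v x) := by
  have hvpos : (0 : ℝ) < v := lt_of_le_of_ne v.coe_nonneg (by exact_mod_cast hv.symm)
  set b : ℝ := (2 * (v : ℝ))⁻¹ with hbdef
  have hb : 0 < b := by positivity
  set C : ℝ := (√(2 * π * v))⁻¹ with hCdef
  have hC : 0 ≤ C := by positivity
  have hpdf : ∀ x, gaussianPDFReal 0 v x = C * rexp (-b * x ^ 2) := by
    intro x
    rw [gaussianPDFReal, sub_zero]
    congr 1
    rw [hbdef]
    field_simp
  have hint2 : Integrable fun x : ℝ => x ^ 2 * rexp (-b * x ^ 2) := by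
    have := integrable_rpow_mul_exp_neg_mul_sq hb (s := 2) (by norm_num)
    have heq : ∀ x : ℝ, x ^ (2 : ℝ) = x ^ 2 := fun x => by
      rw [show (2 : ℝ) = ((2 : ℕ) : ℝ) by norm_num, Real.rpow_natCast]
    simpa only [heq] using this
  have hint1 : Integrable fun x : ℝ => |x| ^ (-(1/2) : ℝ) * rexp (-b * x ^ 2) :=
    integrable_abs_rpow_mul_exp_neg_mul_sq hb (by norm_num)
  have hG : Integrable fun x : ℝ =>
      C * ((4 * |x| ^ (-(1/2) : ℝ) + x ^ 2) * rexp (-b * x ^ 2)) := by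
    apply Integrable.const_mul
    have : (fun x : ℝ => (4 * |x| ^ (-(1/2) : ℝ) + x ^ 2) * rexp (-b * x ^ 2))
        = fun x : ℝ => 4 * (|x| ^ (-(1/2) : ℝ) * rexp (-b * x ^ 2))
          + x ^ 2 * rexp (-b * x ^ 2) := by
      ext x; ring
    rw [this]
    exact (hint1.const_mul 4).add hint2
  apply hG.mono'
  · exact ((Real.measurable_log.comp (measurable_id.pow_const 2)).mul
      (measurable_gaussianPDFReal 0 v)).aestronglyMeasurable
  · filter_upwards with x
    rw [Real.norm_eq_abs, abs_mul, abs_of_nonneg (gaussianPDFReal_nonneg 0 v x), hpdf x]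
    have h2 := mul_le_mul_of_nonneg_left
      (mul_le_mul_of_nonneg_right (abs_log_sq_le x) (Real.exp_nonneg (-b * x ^ 2))) hC
    rw [show |Real.log (x ^ 2)| * (C * rexp (-b * x ^ 2))
        = C * (|Real.log (x ^ 2)| * rexp (-b * x ^ 2)) from by ring]
    exact h2

lemma integrable_log_sq_gaussian {v : ℝ≥0} (hv : v ≠ 0) :
    Integrable (fun x : ℝ => Real.log (x ^ 2)) (gaussianReal 0 v) := by
  rw [gaussianReal_of_var_ne_zero _ hv,
    integrable_withDensity_iff (measurable_gaussianPDF 0 v)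
      (ae_of_all _ fun x => ENNReal.ofReal_lt_top)]
  have : (fun x : ℝ => Real.log (x ^ 2) * (gaussianPDF 0 v x).toReal)
      = fun x : ℝ => Real.log (x ^ 2) * gaussianPDFReal 0 v x := funext fun x => by
    rw [gaussianPDF, ENNReal.toReal_ofReal (gaussianPDFReal_nonneg _ _ _)]
  rw [this]
  exact integrable_log_sq_pdf hv

noncomputable def logSqGaussMean : ℝ := ∫ x, Real.log (x ^ 2) ∂(gaussianReal 0 1)

lemma integral_log_sq_gaussian {v : ℝ≥0} (hv : v ≠ 0) :
    ∫ x, Real.log (x ^ 2) ∂(gaussianReal 0 v) = Real.log (v : ℝ) + logSqGaussMean := by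
  have hvpos : (0 : ℝ) < v := lt_of_le_of_ne v.coe_nonneg (by exact_mod_cast hv.symm)
  have h1 : Measure.map (fun x : ℝ => √(v : ℝ) * x) (gaussianReal 0 1) = gaussianReal 0 v := by
    rw [gaussianReal_map_const_mul]
    congr 1
    · ring
    · ext
      simp [Real.sq_sqrt v.coe_nonneg]
  have hmeaslog : Measurable fun x : ℝ => Real.log (x ^ 2) :=
    Real.measurable_log.comp (measurable_id.pow_const 2)
  rw [← h1, integral_map (by fun_prop) hmeaslog.aestronglyMeasurable]
  have h0 : (gaussianReal 0 1) {(0 : ℝ)} = 0 := by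
    rw [gaussianReal_of_var_ne_zero _ one_ne_zero, withDensity_apply _ (measurableSet_singleton _)]
    simp
  have hae : ∀ᵐ x ∂(gaussianReal 0 1),
      Real.log ((√(v : ℝ) * x) ^ 2) = Real.log (v : ℝ) + Real.log (x ^ 2) := by
    have hne : ({(0:ℝ)}ᶜ : Set ℝ) ∈ ae (gaussianReal 0 1) := compl_mem_ae_iff.mpr h0
    filter_upwards [hne] with x hx
    rw [mul_pow, Real.sq_sqrt v.coe_nonneg,
      Real.log_mul (ne_of_gt hvpos) (pow_ne_zero _ hx)]
  rw [integral_congr_ae hae,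
    integral_add (integrable_const _) (integrable_log_sq_gaussian one_ne_zero)]
  simp [logSqGaussMean]

lemma exp_log_sq_rv {Ω : Type*} [MeasurableSpace Ω] {μ : Measure Ω} [IsProbabilityMeasure μ]
    {X : Ω → ℝ} (hX : Measurable X) {v : ℝ≥0} (hv : v ≠ 0)
    (h : Measure.map X μ = gaussianReal 0 v) :
    Integrable (fun ω => Real.log (X ω ^ 2)) μ ∧
      ∫ ω, Real.log (X ω ^ 2) ∂μ = Real.log (v : ℝ) + logSqGaussMean := by
  have hmeaslog : Measurable fun x : ℝ => Real.log (x ^ 2) :=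
    Real.measurable_log.comp (measurable_id.pow_const 2)
  constructor
  · have := (integrable_map_measure (hmeaslog.aestronglyMeasurable) hX.aemeasurable).mp
      (by rw [h]; exact integrable_log_sq_gaussian hv)
    exact this
  · rw [← integral_log_sq_gaussian hv, ← h,
      integral_map hX.aemeasurable hmeaslog.aestronglyMeasurable]

end Helpers

/-- **Proposition 1 (expectation of the skedastic slope estimator)**:
`E[γ̂₁] = [Σ_i (log(s_i²) − m̄) log v_i] / [Σ_k (log(s_k²) − m̄)²]`. -/
theorem expectation_skedastic_slope
    {N M : ℕ} (hNM : N > M + 1)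
    {Ω : Type*} [MeasurableSpace Ω] (μ : Measure Ω) [IsProbabilityMeasure μ]
    (V : Matrix (Fin N) (Fin (M + 1)) ℝ) (hV : IsUnit (Vᵀ * V).det)
    (H : Matrix (Fin N) (Fin N) ℝ) (hH : H = V * (Vᵀ * V)⁻¹ * Vᵀ)
    (σ : Fin N → ℝ) (hσ : ∀ i, 0 < σ i)
    (ε : Fin N → Ω → ℝ) (hmeas : ∀ i, Measurable (ε i))
    (hindep : iIndepFun ε μ)
    (hgauss : ∀ i, Measure.map (ε i) μ = gaussianReal 0 ⟨σ i ^ 2, sq_nonneg (σ i)⟩)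
    (β : Fin (M + 1) → ℝ)
    (y : Fin N → Ω → ℝ) (hy : ∀ i ω, y i ω = V.mulVec β i + ε i ω)
    (e : Fin N → Ω → ℝ) (he : ∀ i ω, e i ω = (1 - H).mulVec (fun j => y j ω) i)
    -- the DTG variances `s_i²` and the skedastic design matrix `U`
    (s2 : Fin N → ℝ) (hs2 : ∀ i, 0 < s2 i)
    (hne : ∃ i j, Real.log (s2 i) ≠ Real.log (s2 j))
    (U : Matrix (Fin N) (Fin 2) ℝ)
    (hU : ∀ i, U i 0 = 1 ∧ U i 1 = Real.log (s2 i))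
    -- the skedastic coefficient estimators `(γ̂₀, γ̂₁)ᵀ = (UᵀU)⁻¹ Uᵀ log(e²)`
    (γhat : Ω → Fin 2 → ℝ)
    (hγhat : ∀ x, γhat x = ((Uᵀ * U)⁻¹ * Uᵀ).mulVec (fun i => Real.log (e i x ^ 2)))
    -- `m̄`, the `v_i`, and the standardized residuals `Z_i`
    (mbar : ℝ) (hmbar : mbar = (N : ℝ)⁻¹ * ∑ k, Real.log (s2 k))
    (v : Fin N → ℝ)
    (hv : ∀ i, v i = (1 - H i i) ^ 2 * σ i ^ 2 + ∑ k ∈ univ.erase i, H i k ^ 2 * σ k ^ 2)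
    (hvpos : ∀ i, 0 < v i)
    (Z : Fin N → Ω → ℝ) (hZ : ∀ i x, Z i x = e i x / Real.sqrt (v i))
    :
    μ[fun x => γhat x 1]
      = (∑ i, (Real.log (s2 i) - mbar) * Real.log (v i))
        / ∑ k, (Real.log (s2 k) - mbar) ^ 2 := by

  classical
  have hNpos : (0 : ℝ) < N := by
    have : 0 < N := lt_trans (Nat.succ_pos M) hNM
    exact_mod_cast this
  set L : Fin N → ℝ := fun i => Real.log (s2 i) with hLdef
  set S : ℝ := ∑ k, (L k - mbar) ^ 2 with hSdef
  have hsumL : ∑ k, L k = N * mbar := by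
    rw [hmbar]; field_simp
  have hSpos : 0 < S := by
    obtain ⟨i, j, hij⟩ := hne
    have hex : L i ≠ mbar ∨ L j ≠ mbar := by
      by_contra hcon; push_neg at hcon; exact hij (hcon.1.trans hcon.2.symm)
    have hpos : ∀ k : Fin N, L k ≠ mbar → 0 < (L k - mbar) ^ 2 := fun k hk =>
      lt_of_le_of_ne (sq_nonneg _) (Ne.symm (pow_ne_zero 2 (sub_ne_zero.mpr hk)))
    obtain hk | hk := hex
    · exact Finset.sum_pos' (fun k _ => sq_nonneg _) ⟨i, Finset.mem_univ i, hpos i hk⟩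
    · exact Finset.sum_pos' (fun k _ => sq_nonneg _) ⟨j, Finset.mem_univ j, hpos j hk⟩
  have hSne : S ≠ 0 := ne_of_gt hSpos
  -- the 2×2 matrix UᵀU
  have hA00 : (Uᵀ * U) 0 0 = N := by
    simp only [Matrix.mul_apply, Matrix.transpose_apply]
    rw [Finset.sum_congr rfl fun j _ => by rw [(hU j).1, mul_one]]
    simp
  have hA01 : (Uᵀ * U) 0 1 = ∑ k, L k := by
    simp only [Matrix.mul_apply, Matrix.transpose_apply]
    exact Finset.sum_congr rfl fun j _ => by rw [(hU j).1, (hU j).2, one_mul]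
  have hA10 : (Uᵀ * U) 1 0 = ∑ k, L k := by
    simp only [Matrix.mul_apply, Matrix.transpose_apply]
    exact Finset.sum_congr rfl fun j _ => by rw [(hU j).1, (hU j).2, mul_one]
  have hA11 : (Uᵀ * U) 1 1 = ∑ k, L k ^ 2 := by
    simp only [Matrix.mul_apply, Matrix.transpose_apply]
    exact Finset.sum_congr rfl fun j _ => by rw [(hU j).2]; ring
  have hSalt : S = (∑ k, L k ^ 2) - N * mbar ^ 2 := by
    have hexp : S = ∑ k, (L k ^ 2 - 2 * mbar * L k + mbar ^ 2) :=
      Finset.sum_congr rfl fun k _ => by ring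
    rw [hexp]
    rw [Finset.sum_add_distrib, Finset.sum_sub_distrib, ← Finset.mul_sum, hsumL,
      Finset.sum_const, Finset.card_univ, Fintype.card_fin, nsmul_eq_mul]
    ring
  have hdet : (Uᵀ * U).det = N * S := by
    rw [Matrix.det_fin_two, hA00, hA11, hA01, hA10, hSalt, hsumL]
    ring
  have hdetne : (Uᵀ * U).det ≠ 0 := by rw [hdet]; exact ne_of_gt (mul_pos hNpos hSpos)
  have hAinv10 : (Uᵀ * U)⁻¹ 1 0 = (N * S)⁻¹ * (-(∑ k, L k)) := by
    rw [Matrix.inv_def, Matrix.adjugate_fin_two, Ring.inverse_eq_inv']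
    simp [hdet, hA10]
  have hAinv11 : (Uᵀ * U)⁻¹ 1 1 = (N * S)⁻¹ * N := by
    rw [Matrix.inv_def, Matrix.adjugate_fin_two, Ring.inverse_eq_inv']
    simp [hdet, hA00]
  have hcoef : ∀ j, ((Uᵀ * U)⁻¹ * Uᵀ) 1 j = (L j - mbar) / S := by
    intro j
    rw [Matrix.mul_apply, Fin.sum_univ_two]
    simp only [Matrix.transpose_apply]
    rw [(hU j).1, (hU j).2, hAinv10, hAinv11, hsumL]
    field_simp
    ring
  -- residual representation
  have hHV : H * V = V := by
    rw [hH, Matrix.mul_assoc (V * (Vᵀ * V)⁻¹) Vᵀ V, Matrix.mul_assoc V (Vᵀ * V)⁻¹ (Vᵀ * V),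
      Matrix.nonsing_inv_mul _ hV, Matrix.mul_one]
  have he' : ∀ i x, e i x = ∑ j, (1 - H) i j * ε j x := by
    intro i x
    have h1 : e i x = ∑ j, (1 - H) i j * (V.mulVec β j + ε j x) := by
      rw [he]
      simp only [Matrix.mulVec, dotProduct]
      exact Finset.sum_congr rfl fun j _ => by rw [hy]; rfl
    rw [h1]
    have h2 : ∑ j, (1 - H) i j * (V.mulVec β j + ε j x)
        = (∑ j, (1 - H) i j * V.mulVec β j) + ∑ j, (1 - H) i j * ε j x := by
      rw [← Finset.sum_add_distrib]
      exact Finset.sum_congr rfl fun j _ => by ring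
    rw [h2]
    have h3 : (∑ j, (1 - H) i j * V.mulVec β j) = ((1 - H) * V).mulVec β i := by
      rw [← Matrix.mulVec_mulVec]
      rfl
    rw [h3, Matrix.sub_mul, Matrix.one_mul, hHV, sub_self, Matrix.zero_mulVec]
    simp
  have hemeas : ∀ i, Measurable (e i) := by
    intro i
    rw [show e i = fun x => ∑ j, (1 - H) i j * ε j x from funext (he' i)]
    exact Finset.measurable_sum _ fun j _ => (hmeas j).const_mul _
  -- distribution of the residuals
  have hlaw : ∀ i, Measure.map (e i) μ = gaussianReal 0 ⟨v i, (hvpos i).le⟩ := by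
    intro i
    have hXmeas : ∀ j, Measurable fun ω => (1 - H) i j * ε j ω :=
      fun j => (hmeas j).const_mul _
    have hXindep : iIndepFun (fun j => fun ω => (1 - H) i j * ε j ω) μ :=
      hindep.comp (fun j => fun t => (1 - H) i j * t) fun j => measurable_id.const_mul _
    have hXmap : ∀ j, Measure.map (fun ω => (1 - H) i j * ε j ω) μ
        = gaussianReal 0 ⟨(1 - H) i j ^ 2 * σ j ^ 2, by positivity⟩ := by
      intro j
      have hco : (fun ω => (1 - H) i j * ε j ω) = (fun t => (1 - H) i j * t) ∘ ε j := rfl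
      rw [hco, ← Measure.map_map (measurable_id'.const_mul _) (hmeas j), hgauss j]
      refine (gaussianReal_map_const_mul ((1 - H) i j)).trans ?_
      rw [mul_zero]
      congr 1
    have hsum := gaussian_sum_rv hXmeas hXindep hXmap Finset.univ
    rw [show (fun ω => ∑ j, (1 - H) i j * ε j ω) = e i from funext fun ω => (he' i ω).symm]
      at hsum
    rw [hsum]
    congr 1
    apply NNReal.coe_injective
    refine (NNReal.coe_sum _ _).trans ?_
    show ∑ j, (1 - H) i j ^ 2 * σ j ^ 2 = v i
    rw [hv i, ← Finset.add_sum_erase _ _ (Finset.mem_univ i)]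
    congr 1
    · rw [Matrix.sub_apply, Matrix.one_apply_eq]
    · refine Finset.sum_congr rfl fun k hk => ?_
      rw [Matrix.sub_apply, Matrix.one_apply_ne (Finset.ne_of_mem_erase hk).symm]
      ring
  have hvne : ∀ i, (⟨v i, (hvpos i).le⟩ : ℝ≥0) ≠ 0 := by
    intro i h
    have hvz : v i = 0 := congrArg NNReal.toReal h
    exact (hvpos i).ne' hvz
  have hkey : ∀ i, Integrable (fun x => Real.log (e i x ^ 2)) μ ∧
      ∫ x, Real.log (e i x ^ 2) ∂μ = Real.log (v i) + logSqGaussMean := by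
    intro i
    have h := exp_log_sq_rv (hemeas i) (hvne i) (hlaw i)
    exact h
  -- the slope estimator as a weighted sum
  have hγ1 : ∀ x, γhat x 1 = ∑ j, (L j - mbar) / S * Real.log (e j x ^ 2) := by
    intro x
    rw [hγhat x]
    simp only [Matrix.mulVec, dotProduct]
    exact Finset.sum_congr rfl fun j _ => by rw [hcoef j]
  have hzero : ∑ j, (L j - mbar) = 0 := by
    rw [Finset.sum_sub_distrib, hsumL, Finset.sum_const, Finset.card_univ, Fintype.card_fin,
      nsmul_eq_mul]
    ring
  calc μ[fun x => γhat x 1]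
      = ∫ x, ∑ j, (L j - mbar) / S * Real.log (e j x ^ 2) ∂μ :=
        integral_congr_ae (Filter.Eventually.of_forall hγ1)
    _ = ∑ j, ∫ x, (L j - mbar) / S * Real.log (e j x ^ 2) ∂μ :=
        integral_finset_sum _ fun j _ => ((hkey j).1.const_mul _)
    _ = ∑ j, (L j - mbar) / S * (Real.log (v j) + logSqGaussMean) := by
        refine Finset.sum_congr rfl fun j _ => ?_
        rw [integral_const_mul, (hkey j).2]
    _ = (∑ j, (L j - mbar) * Real.log (v j)) / S
          + logSqGaussMean / S * ∑ j, (L j - mbar) := by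
        rw [Finset.sum_div, Finset.mul_sum, ← Finset.sum_add_distrib]
        exact Finset.sum_congr rfl fun j _ => by ring
    _ = (∑ j, (L j - mbar) * Real.log (v j)) / S := by
        rw [hzero, mul_zero, add_zero]
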